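/- Let n_0/n_1 be a reduced rational number with n_0, n_1 coprime positive integers, let N be an integer with N ≥ max{n_1, 2}, let K be a positive integer, let [a_0; a_1, …, a_L] be the continued fraction expansion of n_0/n_1, and let r ≠ n_0/n_1 be a real number with continued fraction expansion [b_0; b_1, …]. If |r − n_0/n_1| < 1/((2K+2) N (N−1)), then one of the following holds: (i) b_i = a_i for all i = 0, 1, …, L, and b_{L+1} ≥ K; or (ii) b_i = a_i for i = 0, 1, …, L−1, b_L = a_L − 1, b_{L+1} = 1, and b_{L+2} ≥ K. -/

import Mathlib

/-- The remainders `r_0, r_1, r_2, …` of the continued fraction algorithm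
applied to a real number `r`: `r_0 = r - ⌊r⌋` and `r_{i+1} = 1/r_i - ⌊1/r_i⌋`. -/
noncomputable def cfRem (r : ℝ) : ℕ → ℝ
  | 0 => Int.fract r
  | i + 1 => Int.fract (cfRem r i)⁻¹

/-- The partial quotients `b_0, b_1, b_2, …` of the continued fraction
expansion of a real number `r`: `b_0 = ⌊r⌋` and `b_{i+1} = ⌊1/r_i⌋`. -/
noncomputable def cfB (r : ℝ) : ℕ → ℤ
  | 0 => ⌊r⌋
  | i + 1 => ⌊(cfRem r i)⁻¹⌋

/-- The integer remainder sequence of the Euclidean algorithm on `n₀/n₁`. -/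
def euc (n₀ n₁ : ℤ) : ℕ → ℤ
  | 0 => n₁
  | 1 => n₀ % n₁
  | (i+2) => euc n₀ n₁ i % euc n₀ n₁ (i+1)

lemma fract_int_div (a b : ℤ) (hb : 0 < b) :
    Int.fract ((a:ℝ)/b) = ((a % b : ℤ):ℝ)/b := by
  lift b to ℕ using hb.le
  have := Int.fract_div_intCast_eq_div_intCast_mod (k := ℝ) (m := a) (n := b)
  push_cast at this ⊢
  rw [this]

lemma opp_abs (A B : ℝ) (h1 : |A| ≤ |B|) (h2 : A * B ≤ 0) : |A + B| ≤ |B| := by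
  rcases abs_cases A with ⟨hA, hA'⟩ | ⟨hA, hA'⟩ <;>
    rcases abs_cases B with ⟨hB, hB'⟩ | ⟨hB, hB'⟩ <;>
      rw [abs_le] <;> constructor <;> nlinarith

lemma floor_inv_ge (K : ℤ) (z : ℝ) (hz : 0 < z) (h : (K:ℝ) * z ≤ 1) : K ≤ ⌊z⁻¹⌋ := by
  rw [Int.le_floor]
  rw [← one_div, le_div_iff₀ hz]
  exact h

lemma floor_inv_one (z : ℝ) (h1 : 1/2 < z) (h2 : z ≤ 1) : ⌊z⁻¹⌋ = 1 := by
  have hz : 0 < z := by linarith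
  rw [Int.floor_eq_iff]
  constructor
  · push_cast
    rw [le_inv_comm₀ one_pos hz]
    simpa using h2
  · push_cast
    norm_num
    rw [inv_lt_iff_one_lt_mul₀ hz]
    linarith

lemma div_mono_num (a b c : ℝ) (hc : 0 < c) (h : a ≤ b) : a/c ≤ b/c := by
  rw [div_le_div_iff₀ hc hc]
  nlinarith

lemma div_mono_den (a b₁ b₂ : ℝ) (ha : 0 ≤ a) (h2 : 0 < b₂) (h : b₂ ≤ b₁) :
    a / b₁ ≤ a / b₂ := by
  rw [div_le_div_iff₀ (lt_of_lt_of_le h2 h) h2]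
  nlinarith

set_option maxHeartbeats 8000000 in
theorem stmt_7 (n₀ n₁ : ℤ) (hn0 : 0 < n₀) (hn1 : 0 < n₁)
    (hcop : Int.gcd n₀ n₁ = 1) (N : ℤ) (hN : max n₁ 2 ≤ N)
    (K : ℤ) (hK : 0 < K) (L : ℕ)
    (hterm : cfRem ((n₀ : ℝ) / (n₁ : ℝ)) L = 0)
    (hnonterm : ∀ i < L, cfRem ((n₀ : ℝ) / (n₁ : ℝ)) i ≠ 0)
    (r : ℝ) (hne : r ≠ (n₀ : ℝ) / (n₁ : ℝ))
    (hr : |r - (n₀ : ℝ) / (n₁ : ℝ)| <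
      1 / ((2 * (K : ℝ) + 2) * (N : ℝ) * ((N : ℝ) - 1))) :
    ((∀ i ≤ L, cfB r i = cfB ((n₀ : ℝ) / (n₁ : ℝ)) i) ∧ K ≤ cfB r (L + 1)) ∨
    ((∀ i < L, cfB r i = cfB ((n₀ : ℝ) / (n₁ : ℝ)) i) ∧
      cfB r L = cfB ((n₀ : ℝ) / (n₁ : ℝ)) L - 1 ∧ cfB r (L + 1) = 1 ∧
      K ≤ cfB r (L + 2)) := by
  set x : ℝ := (n₀ : ℝ) / (n₁ : ℝ) with hxdef
  clear_value x
  set ε : ℝ := r - x with hedef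
  clear_value ε
  have hn1R : (0:ℝ) < (n₁:ℝ) := by exact_mod_cast hn1
  have hNn1 : n₁ ≤ N := le_trans (le_max_left _ _) hN
  have hN2 : (2:ℤ) ≤ N := le_trans (le_max_right _ _) hN
  have hNR : (2:ℝ) ≤ (N:ℝ) := by exact_mod_cast hN2
  have hNn1R : (n₁:ℝ) ≤ (N:ℝ) := by exact_mod_cast hNn1
  have hKR : (1:ℝ) ≤ (K:ℝ) := by exact_mod_cast hK
  have hεne : ε ≠ 0 := by rw [hedef]; exact sub_ne_zero.2 hne
  have hεpos : 0 < |ε| := abs_pos.2 hεne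
  have hden : (0:ℝ) < (2*(K:ℝ)+2)*(N:ℝ)*((N:ℝ)-1) :=
    mul_pos (mul_pos (by linarith) (by linarith)) (by linarith)
  have hK1 : (0:ℝ) < (K:ℝ) + 1 := by linarith
  have hsmall : |ε| * (n₁:ℝ)^2 < 1/((K:ℝ)+1) := by
    have h1 : ((n₁:ℝ))^2 ≤ 2*(N:ℝ)*((N:ℝ)-1) := by nlinarith
    have h2 : (0:ℝ) < 2*(N:ℝ)*((N:ℝ)-1) := by nlinarith
    have e2 : |ε| * (2*(N:ℝ)*((N:ℝ)-1)) <
        (1/((2*(K:ℝ)+2)*(N:ℝ)*((N:ℝ)-1))) * (2*(N:ℝ)*((N:ℝ)-1)) :=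
      mul_lt_mul_of_pos_right hr h2
    have e3 : (1/((2*(K:ℝ)+2)*(N:ℝ)*((N:ℝ)-1))) * (2*(N:ℝ)*((N:ℝ)-1)) = 1/((K:ℝ)+1) := by
      have h3 := hden.ne'
      have h4 := hK1.ne'
      have h5 : (N:ℝ) - 1 ≠ 0 := by linarith
      field_simp
    nlinarith [abs_nonneg ε]
  have hhalf : |ε| * (n₁:ℝ)^2 < 1/2 := by
    have : 1/((K:ℝ)+1) ≤ 1/2 := by
      rw [div_le_div_iff₀ hK1 (by norm_num)]
      linarith
    linarith
  rcases Nat.eq_zero_or_pos L with hL0 | hLpos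
  · -- case L = 0
    subst hL0
    have hn1ne : (n₁:ℝ) ≠ 0 := hn1R.ne'
    have hfr0 : Int.fract x = 0 := hterm
    have hfrx : Int.fract x = ((n₀ % n₁ : ℤ):ℝ)/(n₁:ℝ) := by
      rw [hxdef]; exact fract_int_div n₀ n₁ hn1
    have hmod : n₀ % n₁ = 0 := by
      rw [hfr0] at hfrx
      field_simp at hfrx
      exact_mod_cast (by linarith : ((n₀ % n₁ : ℤ):ℝ) = 0)
    have hn1one : n₁ = 1 := by
      have hdvd : n₁ ∣ n₀ := Int.dvd_of_emod_eq_zero hmod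
      have h3 : n₁ ∣ (1:ℤ) := by
        have h4 : n₁ ∣ ((Int.gcd n₀ n₁ : ℕ) : ℤ) := by
          rw [Int.gcd_eq_gcd_ab]
          exact dvd_add (dvd_mul_of_dvd_left hdvd _) (dvd_mul_of_dvd_left dvd_rfl _)
        rw [hcop] at h4
        exact_mod_cast h4
      have := Int.isUnit_iff.1 (isUnit_of_dvd_one h3)
      omega
    have hx0 : x = (n₀:ℝ) := by rw [hxdef, hn1one]; norm_num
    have hb0x : cfB x 0 = n₀ := by
      show ⌊x⌋ = n₀
      rw [hx0]
      exact Int.floor_intCast n₀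
    have hNN : (0:ℝ) ≤ (N:ℝ)*((N:ℝ)-1) - 2 := by
      nlinarith [mul_nonneg (by linarith : (0:ℝ) ≤ (N:ℝ)-2) (by linarith : (0:ℝ) ≤ (N:ℝ)+1)]
    have h4 : (4*(K:ℝ)+4) ≤ (2*(K:ℝ)+2)*(N:ℝ)*((N:ℝ)-1) := by
      nlinarith [mul_nonneg (by linarith : (0:ℝ) ≤ 2*(K:ℝ)+2) hNN]
    have hε4 : |ε| < 1/(4*(K:ℝ)+4) :=
      lt_of_lt_of_le hr (one_div_le_one_div_of_le (by linarith) h4)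
    have hεK : |ε| * ((K:ℝ)+1) < 1/4 := by
      rw [lt_div_iff₀ (by linarith : (0:ℝ) < 4*(K:ℝ)+4)] at hε4
      nlinarith [abs_nonneg ε]
    have hε2 : |ε| < 1/2 := by nlinarith [abs_nonneg ε]
    have hre : r = (n₀:ℝ) + ε := by rw [hedef, hx0]; ring
    rcases hεne.lt_or_gt with hlt | hgt
    · -- ε < 0 : branch (ii)
      have habs : |ε| = -ε := abs_of_neg hlt
      have hfl : ⌊r⌋ = n₀ - 1 := by
        rw [Int.floor_eq_iff, hre]
        push_cast
        constructor <;> linarith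
      have hrem0 : cfRem r 0 = 1 + ε := by
        show Int.fract r = 1 + ε
        rw [← Int.self_sub_floor, hfl, hre]
        push_cast
        ring
      have hb1 : cfB r 1 = 1 := by
        show ⌊(cfRem r 0)⁻¹⌋ = 1
        rw [hrem0]
        exact floor_inv_one _ (by linarith) (by linarith)
      have hrem1 : cfRem r 1 = (1+ε)⁻¹ - 1 := by
        show Int.fract (cfRem r 0)⁻¹ = _
        rw [← Int.self_sub_floor, show (⌊(cfRem r 0)⁻¹⌋ : ℤ) = 1 from hb1, hrem0]
        norm_num
      have hzval : (1+ε)⁻¹ - 1 = (-ε) / (1+ε) := by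
        have h0 : (1:ℝ) + ε ≠ 0 := by intro h0; rw [show ε = -1 by linarith] at hε2; norm_num at hε2
        field_simp
        ring
      have hb2 : K ≤ cfB r 2 := by
        show K ≤ ⌊(cfRem r 1)⁻¹⌋
        rw [hrem1, hzval]
        apply floor_inv_ge K _ (div_pos (by linarith) (by linarith))
        rw [← mul_div_assoc, div_le_one (by linarith)]
        nlinarith
      refine Or.inr ⟨fun i hi => (Nat.not_lt_zero i hi).elim, ?_, hb1, hb2⟩
      rw [hb0x]
      exact hfl
    · -- ε > 0 : branch (i)
      have habs : |ε| = ε := abs_of_pos hgt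
      have hfl : ⌊r⌋ = n₀ := by
        rw [Int.floor_eq_iff, hre]
        push_cast
        constructor <;> linarith
      have hrem0 : cfRem r 0 = ε := by
        show Int.fract r = ε
        rw [← Int.self_sub_floor, hfl, hre]
        ring
      have hb1 : K ≤ cfB r 1 := by
        show K ≤ ⌊(cfRem r 0)⁻¹⌋
        rw [hrem0]
        exact floor_inv_ge K ε hgt (by nlinarith)
      refine Or.inl ⟨?_, hb1⟩
      intro i hi
      obtain rfl : i = 0 := Nat.le_zero.1 hi
      rw [hb0x]
      exact hfl
  · -- case L ≥ 1
    obtain ⟨M, rfl⟩ : ∃ M, L = M + 1 := ⟨L - 1, (Nat.succ_pred_eq_of_pos hLpos).symm⟩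
    set c : ℕ → ℤ := euc n₀ n₁ with hcdef
    have hc0 : c 0 = n₁ := rfl
    have hc1 : c 1 = n₀ % n₁ := rfl
    have hc2 : ∀ i, c (i+2) = c i % c (i+1) := fun i => rfl
    clear_value c
    -- positivity and remainder formula
    have hpf : ∀ i, i ≤ M + 1 → 0 < c i ∧ cfRem x i = (c (i+1):ℝ)/(c i) := by
      intro i
      induction i with
      | zero =>
        intro _
        refine ⟨by rw [hc0]; exact hn1, ?_⟩
        show Int.fract x = (c 1:ℝ)/(c 0)
        rw [hc1, hc0, hxdef]
        exact fract_int_div n₀ n₁ hn1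
      | succ i ih =>
        intro h
        obtain ⟨hci, hfi⟩ := ih (by omega)
        have hne_i : cfRem x i ≠ 0 := hnonterm i (by omega)
        have hci1ne : c (i+1) ≠ 0 := by
          intro h0
          apply hne_i
          rw [hfi, h0]
          simp
        have hci1nonneg : 0 ≤ c (i+1) := by
          match i with
          | 0 => rw [hc1]; exact Int.emod_nonneg n₀ hn1.ne'
          | (j+1) =>
            rw [hc2 j]
            exact Int.emod_nonneg _ (by exact_mod_cast hci.ne')
        have hci1 : 0 < c (i+1) := lt_of_le_of_ne hci1nonneg (Ne.symm hci1ne)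
        refine ⟨hci1, ?_⟩
        show Int.fract (cfRem x i)⁻¹ = _
        rw [hfi, inv_div, fract_int_div (c i) (c (i+1)) hci1]
        rw [← hc2 i]
    have hcpos : ∀ i, i ≤ M+1 → 0 < c i := fun i h => (hpf i h).1
    have hrem : ∀ i, i ≤ M+1 → cfRem x i = (c (i+1):ℝ)/(c i) := fun i h => (hpf i h).2
    have hcM2 : c (M+2) = 0 := by
      have h := hrem (M+1) le_rfl
      rw [hterm] at h
      have hc := hcpos (M+1) le_rfl
      field_simp at h
      have h2 : (0:ℤ) = c (M+1+1) := by exact_mod_cast (by linarith : (0:ℝ) = c (M+1+1))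
      exact h2.symm
    have hcop' : ∀ i, i ≤ M+1 → IsCoprime (c i) (c (i+1)) := by
      intro i
      induction i with
      | zero =>
        intro _
        have h0 : IsCoprime n₀ n₁ := Int.isCoprime_iff_gcd_eq_one.2 hcop
        have h1 : c 1 = n₀ + c 0 * (-(n₀ / n₁)) := by
          rw [hc0, hc1, Int.emod_def]
          ring
        rw [h1, hc0]
        exact h0.symm.add_mul_left_right _
      | succ i ih =>
        intro h
        have h1 : c (i+2) = c i + c (i+1) * (-(c i / c (i+1))) := by
          rw [hc2 i, Int.emod_def]
          ring
        rw [h1]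
        exact ((ih (by omega)).symm).add_mul_left_right _
    have hcM1 : c (M+1) = 1 := by
      have h := hcop' (M+1) le_rfl
      rw [hcM2, isCoprime_zero_right] at h
      have hpos := hcpos (M+1) le_rfl
      rcases Int.isUnit_iff.1 h with h' | h' <;> omega
    have hdec : ∀ i, i + 1 ≤ M+1 → c (i+1) < c i := by
      intro i h
      match i with
      | 0 =>
        show c 1 < c 0
        rw [hc0, hc1]
        exact Int.emod_lt_of_pos n₀ hn1
      | (j+1) =>
        rw [hc2 j]
        exact Int.emod_lt_of_pos _ (hcpos (j+1) (by omega))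
    have hc_ge : ∀ i, i + 1 ≤ M+1 → 2 ≤ c i := by
      intro i h
      have h1 := hdec i h
      have h2 : 0 < c (i+1) := hcpos (i+1) h
      omega
    -- the advance step
    have advance : ∀ i, i + 1 ≤ M + 1 → ∀ D : ℝ,
        cfRem r i = (c (i+1):ℝ)/(c i) + (-1)^i * ε * (n₁:ℝ)^2/((c i:ℝ)^2 * D) →
        |D - 1| ≤ |ε| * (n₁:ℝ)^2/((c i:ℝ)^2) →
        0 ≤ (-1:ℝ)^(i+1) * ε * (D-1) →
        ∃ D' : ℝ,
          (cfRem r i)⁻¹ = (c i:ℝ)/(c (i+1)) + (-1)^(i+1) * ε * (n₁:ℝ)^2/((c (i+1):ℝ)^2 * D') ∧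
          |D' - 1| ≤ |ε| * (n₁:ℝ)^2/((c i:ℝ)*(c (i+1))) ∧
          0 ≤ (-1:ℝ)^(i+2) * ε * (D'-1) := by
      intro i hi D hform hDb hDs
      have hciZ : 2 ≤ c i := hc_ge i hi
      have hci1Z : 0 < c (i+1) := hcpos (i+1) hi
      have hdZ : c (i+1) < c i := hdec i hi
      have hciR : (2:ℝ) ≤ (c i:ℝ) := by exact_mod_cast hciZ
      have hci1R : (1:ℝ) ≤ (c (i+1):ℝ) := by exact_mod_cast hci1Z
      have hdR : (c (i+1):ℝ) ≤ (c i:ℝ) := by exact_mod_cast hdZ.le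
      have hcipos : (0:ℝ) < (c i:ℝ) := by linarith
      have hci1pos : (0:ℝ) < (c (i+1):ℝ) := by linarith
      have hp1 : (-1:ℝ)^(i+1) = -((-1:ℝ)^i) := by rw [pow_succ]; ring
      have hp2 : (-1:ℝ)^(i+2) = (-1:ℝ)^i := by rw [pow_succ, pow_succ]; ring
      have hs : (-1:ℝ)^i = 1 ∨ (-1:ℝ)^i = -1 := by
        rcases Nat.even_or_odd i with he | ho
        · exact Or.inl he.neg_one_pow
        · exact Or.inr ho.neg_one_pow
      have hs2 : ((-1:ℝ)^i)^2 = 1 := by rcases hs with h | h <;> rw [h] <;> norm_num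
      have hsabs : |(-1:ℝ)^i| = 1 := by rcases hs with h | h <;> rw [h] <;> norm_num
      have habs : |ε| * |ε| = ε^2 := by rw [← sq_abs]; ring
      have hn1sq : (0:ℝ) ≤ (n₁:ℝ)^2 := by positivity
      have hne1 : (c i:ℝ) ≠ 0 := hcipos.ne'
      have hne2 : (c (i+1):ℝ) ≠ 0 := hci1pos.ne'
      have hprodpos : (0:ℝ) < (c i:ℝ)*(c (i+1):ℝ) := mul_pos hcipos hci1pos
      have hsqpos : (0:ℝ) < (c i:ℝ)^2 := pow_pos hcipos 2
      -- numeric bound on the old error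
      have hend : |ε| * (n₁:ℝ)^2/((c i:ℝ)^2) ≤ 1/8 := by
        rw [div_le_iff₀ hsqpos]
        nlinarith
      have hDlow : (7:ℝ)/8 ≤ D := by
        have := (abs_le.1 hDb).1
        linarith
      have hDpos : (0:ℝ) < D := by linarith
      obtain ⟨D', hD'def⟩ : ∃ Dp : ℝ, Dp = D + (-1:ℝ)^i * ε * (n₁:ℝ)^2/((c i:ℝ)*(c (i+1):ℝ)) :=
        ⟨_, rfl⟩
      have hBabs : |(-1:ℝ)^i * ε * (n₁:ℝ)^2/((c i:ℝ)*(c (i+1):ℝ))|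
          = |ε| * (n₁:ℝ)^2/((c i:ℝ)*(c (i+1):ℝ)) := by
        rw [abs_div, abs_mul, abs_mul, hsabs, one_mul, abs_of_nonneg hn1sq,
          abs_of_pos hprodpos]
      have hmono : |ε| * (n₁:ℝ)^2/((c i:ℝ)^2) ≤ |ε| * (n₁:ℝ)^2/((c i:ℝ)*(c (i+1):ℝ)) := by
        apply div_mono_den _ _ _ (by positivity) hprodpos
        nlinarith
      have hD'b : |D' - 1| ≤ |ε| * (n₁:ℝ)^2/((c i:ℝ)*(c (i+1):ℝ)) := by
        have hAB : (D - 1) * ((-1:ℝ)^i * ε * (n₁:ℝ)^2/((c i:ℝ)*(c (i+1):ℝ))) ≤ 0 := by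
          have heq : (D - 1) * ((-1:ℝ)^i * ε * (n₁:ℝ)^2/((c i:ℝ)*(c (i+1):ℝ)))
              = -((-1:ℝ)^(i+1)*ε*(D-1) * ((n₁:ℝ)^2/((c i:ℝ)*(c (i+1):ℝ)))) := by
            rw [hp1]; ring
          rw [heq]
          have : (0:ℝ) ≤ (-1:ℝ)^(i+1)*ε*(D-1) * ((n₁:ℝ)^2/((c i:ℝ)*(c (i+1):ℝ))) :=
            mul_nonneg hDs (div_nonneg hn1sq hprodpos.le)
          linarith
        have h1 : |D - 1| ≤ |(-1:ℝ)^i * ε * (n₁:ℝ)^2/((c i:ℝ)*(c (i+1):ℝ))| := by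
          rw [hBabs]
          exact le_trans hDb hmono
        have h2 := opp_abs (D-1) _ h1 hAB
        rw [hBabs] at h2
        have h3 : D' - 1 = (D - 1) + (-1:ℝ)^i * ε * (n₁:ℝ)^2/((c i:ℝ)*(c (i+1):ℝ)) := by
          rw [hD'def]; ring
        rw [h3]
        exact h2
      have hend2 : |ε| * (n₁:ℝ)^2/((c i:ℝ)*(c (i+1):ℝ)) ≤ 1/4 := by
        rw [div_le_iff₀ hprodpos]
        nlinarith
      have hD'low : (3:ℝ)/4 ≤ D' := by
        have := (abs_le.1 hD'b).1
        linarith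
      have hD'pos : (0:ℝ) < D' := by linarith
      -- sign fact
      have hD's : 0 ≤ (-1:ℝ)^(i+2) * ε * (D'-1) := by
        rw [hp2]
        have expand : (-1:ℝ)^i*ε*(D'-1) = (-1:ℝ)^i*ε*(D-1)
            + ((-1:ℝ)^i)^2*ε^2*(n₁:ℝ)^2/((c i:ℝ)*(c (i+1):ℝ)) := by
          rw [hD'def]; ring
        rw [expand, hs2, one_mul]
        have e1 : -(|ε| * (|ε| * (n₁:ℝ)^2 / ((c i:ℝ)^2))) ≤ (-1:ℝ)^i*ε*(D-1) := by
          have h1 : |(-1:ℝ)^i*ε*(D-1)| ≤ |ε| * (|ε| * (n₁:ℝ)^2 / ((c i:ℝ)^2)) := by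
            rw [abs_mul, abs_mul, hsabs, one_mul]
            exact mul_le_mul_of_nonneg_left hDb (abs_nonneg ε)
          linarith [neg_abs_le ((-1:ℝ)^i*ε*(D-1))]
        have e2 : ε^2*(n₁:ℝ)^2/((c i:ℝ)^2) ≤ ε^2*(n₁:ℝ)^2/((c i:ℝ)*(c (i+1):ℝ)) := by
          apply div_mono_den _ _ _ (by positivity) hprodpos
          nlinarith
        have e3 : |ε| * (|ε| * (n₁:ℝ)^2 / ((c i:ℝ)^2)) = ε^2*(n₁:ℝ)^2/((c i:ℝ)^2) := by
          rw [← habs]; ring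
        nlinarith
      -- the Möbius identity
      have hkey : (c i:ℝ) * (c (i+1):ℝ) * D'
          = (c i:ℝ) * (c (i+1):ℝ) * D + (-1:ℝ)^i*ε*(n₁:ℝ)^2 := by
        rw [hD'def]
        field_simp
      have hD'pos' : (0:ℝ) < D' := hD'pos
      have hr1 : cfRem r i = (c (i+1):ℝ) * D' / ((c i:ℝ) * D) := by
        rw [hform, eq_div_iff (mul_pos hcipos hDpos).ne']
        field_simp
        linear_combination -hkey
      refine ⟨D', ?_, hD'b, hD's⟩
      rw [hr1, inv_div, hp1, eq_comm]
      field_simp [hD'pos.ne', hDpos.ne']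
      linear_combination hkey
    -- the main invariant
    have main : ∀ i, i + 1 ≤ M + 1 → (∀ j ≤ i, cfB r j = cfB x j) ∧ ∃ D : ℝ,
        cfRem r i = (c (i+1):ℝ)/(c i) + (-1)^i * ε * (n₁:ℝ)^2/((c i:ℝ)^2 * D) ∧
        |D - 1| ≤ |ε| * (n₁:ℝ)^2/((c i:ℝ)^2) ∧
        0 ≤ (-1:ℝ)^(i+1) * ε * (D-1) := by
      intro i
      induction i with
      | zero =>
        intro _
        have hc1pos : 0 < c 1 := hcpos 1 (by omega)
        have hc1lt : c 1 < c 0 := hdec 0 (by omega)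
        have h1R : (1:ℝ) ≤ (c 1:ℝ) := by exact_mod_cast hc1pos
        have h2R : (c 1:ℝ) ≤ (n₁:ℝ) - 1 := by
          have h9 : c 1 ≤ n₁ - 1 := by omega
          exact_mod_cast h9
        have hn1ge1 : (1:ℝ) ≤ (n₁:ℝ) := by exact_mod_cast hn1
        have hfr : Int.fract x = (c 1:ℝ)/(n₁:ℝ) := by
          have h' := hrem 0 (by omega)
          rw [hc0] at h'
          exact h'
        have hεn1 : |ε| * (n₁:ℝ) < 1/2 := by
          nlinarith [abs_nonneg ε]
        have e2 : |ε| < 1/(n₁:ℝ) := by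
          rw [lt_div_iff₀ hn1R]
          linarith
        obtain ⟨e2a, e2b⟩ := abs_lt.1 e2
        have e1 : (1:ℝ)/n₁ ≤ (c 1:ℝ)/n₁ := div_mono_num _ _ _ hn1R h1R
        have e3 : (c 1:ℝ)/n₁ ≤ ((n₁:ℝ)-1)/n₁ := div_mono_num _ _ _ hn1R h2R
        have e4 : ((n₁:ℝ)-1)/n₁ = 1 - 1/n₁ := by field_simp
        have hxf := Int.floor_add_fract x
        have hfl : ⌊r⌋ = ⌊x⌋ := by
          rw [Int.floor_eq_iff]
          constructor
          · rw [hfr] at hxf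
            have : r = x + ε := by rw [hedef]; ring
            nlinarith
          · rw [hfr] at hxf
            have : r = x + ε := by rw [hedef]; ring
            nlinarith
        constructor
        · intro j hj
          obtain rfl : j = 0 := Nat.le_zero.1 hj
          exact hfl
        · refine ⟨1, ?_, by simp; positivity, by simp⟩
          have h5 : Int.fract r = Int.fract x + ε := by
            rw [← Int.self_sub_floor r, ← Int.self_sub_floor x, hfl, hedef]
            ring
          show Int.fract r = _
          rw [h5, hfr, hc0, pow_zero]
          have : (n₁:ℝ) ≠ 0 := hn1R.ne'
          field_simp
      | succ i ih =>
        intro h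
        obtain ⟨hbj, D, hform, hDb, hDs⟩ := ih (by omega)
        obtain ⟨D', hinv, hD'b, hD's⟩ := advance i (by omega) D hform hDb hDs
        have hci1Z : 2 ≤ c (i+1) := hc_ge (i+1) h
        have hci2pos : 0 < c (i+2) := hcpos (i+2) h
        have hci2lt : c (i+2) < c (i+1) := hdec (i+1) h
        have hcilt : c (i+1) < c i := hdec i (by omega)
        have hBR : (2:ℝ) ≤ (c (i+1):ℝ) := by exact_mod_cast hci1Z
        have hBpos : (0:ℝ) < (c (i+1):ℝ) := by linarith
        have hApos : (0:ℝ) < (c i:ℝ) := by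
          have := hcpos i (by omega)
          exact_mod_cast this
        have hABR : (c (i+1):ℝ) ≤ (c i:ℝ) := by exact_mod_cast hcilt.le
        have hCR1 : (1:ℝ) ≤ (c (i+2):ℝ) := by exact_mod_cast hci2pos
        have hCRB : (c (i+2):ℝ) ≤ (c (i+1):ℝ) - 1 := by
          have h9 : c (i+2) ≤ c (i+1) - 1 := by omega
          exact_mod_cast h9
        have hn1sq : (0:ℝ) ≤ (n₁:ℝ)^2 := by positivity
        -- D' bounds
        have hD'chain : |D' - 1| ≤ |ε| * (n₁:ℝ)^2/((c (i+1):ℝ)^2) := by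
          refine le_trans hD'b (div_mono_den _ _ _ (by positivity) (pow_pos hBpos 2) ?_)
          nlinarith
        have hD'low : (3:ℝ)/4 ≤ D' := by
          have h1 : |ε| * (n₁:ℝ)^2/((c (i+1):ℝ)^2) ≤ 1/4 := by
            rw [div_le_iff₀ (pow_pos hBpos 2)]
            nlinarith
          have := (abs_le.1 hD'chain).1
          linarith
        have hD'pos : (0:ℝ) < D' := by linarith
        -- the tail
        have hsabs1 : |(-1:ℝ)^(i+1)| = 1 := by
          rw [abs_pow, abs_neg, abs_one, one_pow]
        have habsT : |(-1:ℝ)^(i+1) * ε * (n₁:ℝ)^2/((c (i+1):ℝ)^2 * D')|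
            = |ε| * (n₁:ℝ)^2/((c (i+1):ℝ)^2 * D') := by
          rw [abs_div, abs_mul, abs_mul, hsabs1, one_mul, abs_of_nonneg hn1sq,
            abs_of_pos (mul_pos (pow_pos hBpos 2) hD'pos)]
        have hT'b : |(-1:ℝ)^(i+1) * ε * (n₁:ℝ)^2/((c (i+1):ℝ)^2 * D')| ≤ 1/(2*(c (i+1):ℝ)) := by
          rw [habsT, div_le_div_iff₀ (mul_pos (pow_pos hBpos 2) hD'pos) (by linarith)]
          nlinarith
        obtain ⟨hT'l, hT'r⟩ := abs_le.1 hT'b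
        -- floors
        have hxinv : (cfRem x i)⁻¹ = (c i:ℝ)/(c (i+1):ℝ) := by
          rw [hrem i (by omega), inv_div]
        have hfrx : Int.fract ((c i:ℝ)/(c (i+1):ℝ)) = (c (i+2):ℝ)/(c (i+1):ℝ) := by
          have h' := fract_int_div (c i) (c (i+1)) (by exact_mod_cast hBpos)
          rw [← hc2 i] at h'
          exact h'
        have hABa := Int.floor_add_fract ((c i:ℝ)/(c (i+1):ℝ))
        rw [hfrx] at hABa
        have hCB1 : (1:ℝ)/(c (i+1):ℝ) ≤ (c (i+2):ℝ)/(c (i+1):ℝ) := div_mono_num _ _ _ hBpos hCR1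
        have hCB2 : (c (i+2):ℝ)/(c (i+1):ℝ) ≤ ((c (i+1):ℝ)-1)/(c (i+1):ℝ) :=
          div_mono_num _ _ _ hBpos hCRB
        have e4 : ((c (i+1):ℝ)-1)/(c (i+1):ℝ) = 1 - 1/(c (i+1):ℝ) := by
          field_simp
        have e5 : 2 * (1/(2*(c (i+1):ℝ))) = 1/(c (i+1):ℝ) := by
          field_simp
        have e6 : (0:ℝ) < 1/(c (i+1):ℝ) := by positivity
        have hfly : ⌊(cfRem r i)⁻¹⌋ = ⌊(c i:ℝ)/(c (i+1):ℝ)⌋ := by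
          rw [Int.floor_eq_iff]
          constructor
          · rw [hinv]
            linarith
          · rw [hinv]
            linarith
        have hbee : cfB r (i+1) = cfB x (i+1) := by
          show ⌊(cfRem r i)⁻¹⌋ = ⌊(cfRem x i)⁻¹⌋
          rw [hxinv, hfly]
        constructor
        · intro j hj
          rcases Nat.lt_succ_iff_lt_or_eq.1 (Nat.lt_succ_of_le hj) with h' | h'
          · exact hbj j (by omega)
          · rw [h']
            exact hbee
        · refine ⟨D', ?_, hD'chain, hD's⟩
          show Int.fract (cfRem r i)⁻¹ = _
          rw [← Int.self_sub_floor, hfly, hinv]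
          have h9 : ((c (i+1+1):ℤ):ℝ) = ((c (i+2):ℤ):ℝ) := rfl
          rw [h9]
          linear_combination -hABa
    -- the endgame
    obtain ⟨hbj, D, hform, hDb, hDs⟩ := main M le_rfl
    obtain ⟨D', hinv, hD'b, hD's⟩ := advance M le_rfl D hform hDb hDs
    have hn1sq : (0:ℝ) ≤ (n₁:ℝ)^2 := by positivity
    have hCMR : ((c (M+1):ℤ):ℝ) = 1 := by rw [hcM1]; norm_num
    have hcMge : 2 ≤ c M := hc_ge M le_rfl
    have hcMR : (2:ℝ) ≤ (c M:ℝ) := by exact_mod_cast hcMge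
    have hcMpos : (0:ℝ) < (c M:ℝ) := by linarith
    have hy : (cfRem r M)⁻¹ = (c M:ℝ) + (-1:ℝ)^(M+1) * ε * (n₁:ℝ)^2/D' := by
      rw [hinv, hCMR]
      ring
    obtain ⟨u, hudef⟩ : ∃ u:ℝ, u = (-1:ℝ)^(M+1) * ε * (n₁:ℝ)^2 := ⟨_, rfl⟩
    have hy' : (cfRem r M)⁻¹ = (c M:ℝ) + u/D' := by rw [hy, hudef]
    have huabs : |u| = |ε| * (n₁:ℝ)^2 := by
      rw [hudef, abs_mul, abs_mul, abs_pow, abs_neg, abs_one, one_pow, one_mul,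
        abs_of_nonneg hn1sq]
    have hune : u ≠ 0 := by
      rw [hudef]
      exact mul_ne_zero (mul_ne_zero (pow_ne_zero _ (by norm_num)) hεne)
        (pow_ne_zero 2 hn1R.ne')
    have husmall : |u| < 1/((K:ℝ)+1) := by rw [huabs]; exact hsmall
    have hu12 : |u| < 1/2 := by rw [huabs]; exact hhalf
    -- sign of D' - 1
    have hsign : u * (D' - 1) ≤ 0 := by
      have hp : (-1:ℝ)^(M+2) = -((-1:ℝ)^(M+1)) := by rw [pow_succ]; ring
      rw [hp] at hD's
      have h1 : (-1:ℝ)^(M+1)*ε*(D'-1) ≤ 0 := by linarith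
      rw [hudef]
      nlinarith
    -- |D' - 1| ≤ |u|/2
    have hD'b2 : |D' - 1| ≤ |u|/2 := by
      rw [huabs]
      refine le_trans hD'b ?_
      rw [hCMR, mul_one, div_le_div_iff₀ hcMpos (by norm_num)]
      nlinarith [mul_nonneg (mul_nonneg (abs_nonneg ε) hn1sq) (by linarith : (0:ℝ) ≤ (c M:ℝ) - 2)]
    have hD'low : (3:ℝ)/4 ≤ D' := by
      have := (abs_le.1 hD'b2).1
      linarith
    have hD'pos : (0:ℝ) < D' := by linarith
    -- value of cfB x (M+1)
    have hcfbx : cfB x (M+1) = c M := by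
      show ⌊(cfRem x M)⁻¹⌋ = c M
      rw [hrem M (by omega), inv_div, hCMR, div_one, Int.floor_intCast]
    rcases lt_or_gt_of_ne hune with hu | hu
    · -- u < 0 : branch (ii)
      have hD'ge1 : (1:ℝ) ≤ D' := by nlinarith
      obtain ⟨d, hddef⟩ : ∃ d:ℝ, d = -u/D' := ⟨_, rfl⟩
      have hdpos : 0 < d := by rw [hddef]; exact div_pos (by linarith) hD'pos
      have hdlt : d < 1/((K:ℝ)+1) := by
        have h1 : d ≤ -u := by
          rw [hddef]
          exact div_le_self (by linarith) hD'ge1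
        have h2 : -u = |u| := (abs_of_neg hu).symm
        linarith
      have hd12 : d < 1/2 := by
        have : 1/((K:ℝ)+1) ≤ 1/2 := by
          rw [div_le_div_iff₀ hK1 (by norm_num)]
          linarith
        linarith
      have hy'' : (cfRem r M)⁻¹ = (c M:ℝ) - d := by rw [hy', hddef]; ring
      have hfloor : ⌊(cfRem r M)⁻¹⌋ = c M - 1 := by
        rw [Int.floor_eq_iff, hy'']
        push_cast
        constructor <;> linarith
      have hbL : cfB r (M+1) = c M - 1 := hfloor
      have hremL : cfRem r (M+1) = 1 - d := by
        show Int.fract (cfRem r M)⁻¹ = 1 - d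
        rw [← Int.self_sub_floor, hfloor, hy'']
        push_cast
        ring
      have hbL1 : cfB r (M+2) = 1 := by
        show ⌊(cfRem r (M+1))⁻¹⌋ = 1
        rw [hremL]
        exact floor_inv_one _ (by linarith) (by linarith)
      have hremL1 : cfRem r (M+2) = (1-d)⁻¹ - 1 := by
        show Int.fract (cfRem r (M+1))⁻¹ = _
        rw [← Int.self_sub_floor]
        rw [show (⌊(cfRem r (M+1))⁻¹⌋ : ℤ) = 1 from hbL1, hremL]
        norm_num
      have hzval : (1-d)⁻¹ - 1 = d / (1-d) := by
        have h0 : (1:ℝ) - d ≠ 0 := by linarith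
        field_simp
        ring
      have hbL2 : K ≤ cfB r (M+3) := by
        show K ≤ ⌊(cfRem r (M+2))⁻¹⌋
        rw [hremL1, hzval]
        apply floor_inv_ge K _ (div_pos hdpos (by linarith))
        rw [← mul_div_assoc, div_le_one (by linarith)]
        have h1 : d * ((K:ℝ)+1) < 1 := by
          rw [lt_div_iff₀ hK1] at hdlt
          linarith
        nlinarith
      refine Or.inr ⟨?_, ?_, ?_, ?_⟩
      · intro i hi
        exact hbj i (by omega)
      · rw [hbL, hcfbx]
      · exact hbL1
      · exact hbL2
    · -- u > 0 : branch (i)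
      have hD'le1 : D' ≤ 1 := by nlinarith
      obtain ⟨d, hddef⟩ : ∃ d:ℝ, d = u/D' := ⟨_, rfl⟩
      have hdpos : 0 < d := by rw [hddef]; exact div_pos hu hD'pos
      have huK : u * ((K:ℝ)+1) < 1 := by
        have h2 : u = |u| := (abs_of_pos hu).symm
        rw [lt_div_iff₀ hK1] at husmall
        rw [h2]
        linarith
      have hub : |D' - 1| ≤ u/2 := by
        have h2 : u = |u| := (abs_of_pos hu).symm
        linarith
      have hKd : (K:ℝ) * d < 1 := by
        rw [hddef, ← mul_div_assoc, div_lt_one hD'pos]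
        have := (abs_le.1 hub).1
        nlinarith
      have hd1 : d < 1 := by nlinarith [mul_nonneg (by linarith : (0:ℝ) ≤ (K:ℝ) - 1) hdpos.le]
      have hy'' : (cfRem r M)⁻¹ = (c M:ℝ) + d := by rw [hy', hddef]
      have hfloor : ⌊(cfRem r M)⁻¹⌋ = c M := by
        rw [Int.floor_eq_iff, hy'']
        push_cast
        constructor <;> linarith
      have hbL : cfB r (M+1) = cfB x (M+1) := by
        show ⌊(cfRem r M)⁻¹⌋ = cfB x (M+1)
        rw [hfloor, hcfbx]
      have hremL : cfRem r (M+1) = d := by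
        show Int.fract (cfRem r M)⁻¹ = d
        rw [← Int.self_sub_floor, hfloor, hy'']
        ring
      have hbL1 : K ≤ cfB r (M+2) := by
        show K ≤ ⌊(cfRem r (M+1))⁻¹⌋
        rw [hremL]
        exact floor_inv_ge K d hdpos hKd.le
      refine Or.inl ⟨?_, hbL1⟩
      intro i hi
      rcases Nat.lt_succ_iff_lt_or_eq.1 (Nat.lt_succ_of_le hi) with h' | h'
      · exact hbj i (by omega)
      · rw [h']
        exact hbL
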